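/- arXiv:2310.05921 — 6 statements merged into one kernel-verified Lean document; each statement's English description precedes it below -/
import Mathlib

section
/- Suppose λ_{t+1} = λ_t + η(ε − ℓ_t) with η > 0, ε, ℓ_t ∈ [0,1], λ_1 ≥ λ^safe − η, and the eventual-safety property holds with horizon K ≥ 1 and safe level ε^safe ≤ ε: whenever λ_{t−K+1}, …, λ_t are all ≤ λ^safe, the average (1/K) Σ_{k=1}^{K} ℓ_{t−k+1} ≤ ε^safe. Then λ_t ≥ λ^safe − Kη for all t in 1,…,T+1. -/
theorem conformal_lambda_lower_bound
    (η ε εsafe lsafe : ℝ) (K T : ℕ) (ℓ lam : ℕ → ℝ)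
    (hη : 0 < η) (hε : ε ∈ Set.Icc (0:ℝ) 1)
    (hεsafe : εsafe ∈ Set.Icc (0:ℝ) 1) (hsafe_le : εsafe ≤ ε)
    (hK : 1 ≤ K)
    (hℓ : ∀ t ≥ 1, ℓ t ∈ Set.Icc (0:ℝ) 1)
    (hupd : ∀ t ≥ 1, lam (t + 1) = lam t + η * (ε - ℓ t))
    (hinit : lam 1 ≥ lsafe - η)
    (hevsafe : ∀ t ≥ K, (∀ s ∈ Finset.Icc (t - K + 1) t, lam s ≤ lsafe) →
      (1 / (K : ℝ)) * ∑ s ∈ Finset.Icc (t - K + 1) t, ℓ s ≤ εsafe) :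
    ∀ t ∈ Finset.Icc 1 (T + 1), lam t ≥ lsafe - (K : ℝ) * η := by
  obtain ⟨hε0, hε1⟩ := hε
  obtain ⟨hεs0, hεs1⟩ := hεsafe
  have hK1 : (1:ℝ) ≤ K := by exact_mod_cast hK
  -- telescoping
  have tele : ∀ m, 1 ≤ m → ∀ n, m ≤ n →
      lam n = lam m + η * ∑ s ∈ Finset.Ico m n, (ε - ℓ s) := by
    intro m hm n hn
    induction n, hn using Nat.le_induction with
    | base => simp
    | succ n hn ih =>
      rw [Finset.sum_Ico_succ_top hn, hupd n (le_trans hm hn), ih]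
      ring
  -- each term bounds
  have hterm_lb : ∀ s, 1 ≤ s → (-1:ℝ) ≤ ε - ℓ s := by
    intro s hs
    have := (hℓ s hs).2
    linarith
  have sum_lb : ∀ m n : ℕ, 1 ≤ m →
      -((n - m : ℕ) : ℝ) ≤ ∑ s ∈ Finset.Ico m n, (ε - ℓ s) := by
    intro m n hm
    calc -((n - m : ℕ) : ℝ) = ∑ s ∈ Finset.Ico m n, (-1:ℝ) := by
          simp [Nat.card_Ico]
      _ ≤ ∑ s ∈ Finset.Ico m n, (ε - ℓ s) := by
          apply Finset.sum_le_sum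
          intro s hs
          exact hterm_lb s (le_trans hm (Finset.mem_Ico.mp hs).1)
  have key : ∀ t, 1 ≤ t → lam t ≥ lsafe - (K : ℝ) * η := by
    intro t
    induction t using Nat.strong_induction_on with
    | _ t IH =>
      intro ht1
      rcases eq_or_lt_of_le ht1 with h1 | h1
      · have : t = 1 := h1.symm
        subst this
        nlinarith
      · obtain ⟨u, rfl⟩ : ∃ u, t = u + 1 := ⟨t - 1, by omega⟩
        have hu1 : 1 ≤ u := by omega
        by_cases hcase : u < K
        · -- early phase: telescope from time 1
          have h := tele 1 le_rfl (u + 1) (by omega)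
          have hsum := sum_lb 1 (u + 1) le_rfl
          have hcard : ((u + 1 - 1 : ℕ) : ℝ) = (u : ℝ) := by norm_num
          rw [hcard] at hsum
          have huK : (u : ℝ) + 1 ≤ (K : ℝ) := by exact_mod_cast hcase
          nlinarith
        · push_neg at hcase
          by_contra hcon
          push_neg at hcon
          set a := u - K + 1 with ha
          have ha1 : 1 ≤ a := by omega
          have hau : a ≤ u := by omega
          have hcard : u + 1 - a = K := by omega
          -- all window points are ≤ lsafe
          have hwin : ∀ s ∈ Finset.Icc a u, lam s ≤ lsafe := by
            intro s hs
            obtain ⟨hs1, hs2⟩ := Finset.mem_Icc.mp hs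
            have hs1' : 1 ≤ s := le_trans ha1 hs1
            have h := tele s hs1' (u + 1) (by omega)
            have hsum := sum_lb s (u + 1) hs1'
            have hle : ((u + 1 - s : ℕ) : ℝ) ≤ (K : ℝ) := by
              exact_mod_cast (by omega : u + 1 - s ≤ K)
            nlinarith
          -- eventual safety
          have hloss := hevsafe u hcase hwin
          have hKpos : (0:ℝ) < K := by linarith
          have hsumℓ : ∑ s ∈ Finset.Icc a u, ℓ s ≤ (K : ℝ) * ε := by
            have h1 : ∑ s ∈ Finset.Icc a u, ℓ s ≤ (K : ℝ) * εsafe := by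
              have := hloss
              rw [div_mul_eq_mul_div, one_mul, div_le_iff₀ hKpos] at this
              linarith [this]
            nlinarith
          -- telescope over the window
          have h := tele a ha1 (u + 1) (by omega)
          have hsplit : ∑ s ∈ Finset.Ico a (u + 1), (ε - ℓ s)
              = (K : ℝ) * ε - ∑ s ∈ Finset.Icc a u, ℓ s := by
            rw [Finset.sum_sub_distrib, Finset.sum_const, Nat.card_Ico, hcard]
            have : Finset.Ico a (u + 1) = Finset.Icc a u := by
              rw [Finset.Ico_add_one_right_eq_Icc]
            rw [this]
            simp [mul_comm]
          rw [hsplit] at h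
          have hIH := IH a (by omega) ha1
          nlinarith
  intro t ht
  exact key t (Finset.mem_Icc.mp ht).1
end

section
/- Under the conformal controller update λ_{t+1} = λ_t + η(ε − ℓ_t) with λ_1 ≥ λ^safe − η and the eventual-safety property (horizon K, safe level ε^safe ≤ ε), the empirical risk satisfies (1/t) Σ_{s=1}^{t} ℓ_s ≤ ε + ((λ_1 − λ^safe)/η + K)/t for every t ≥ K. -/
theorem conformal_controller_risk_bound
    (η ε εsafe lsafe : ℝ) (K : ℕ) (ℓ lam : ℕ → ℝ)
    (hη : 0 < η) (hε : ε ∈ Set.Icc (0:ℝ) 1)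
    (hεsafe : εsafe ∈ Set.Icc (0:ℝ) 1) (hsafe_le : εsafe ≤ ε)
    (hK : 1 ≤ K)
    (hℓ : ∀ t ≥ 1, ℓ t ∈ Set.Icc (0:ℝ) 1)
    (hupd : ∀ t ≥ 1, lam (t + 1) = lam t + η * (ε - ℓ t))
    (hinit : lam 1 ≥ lsafe - η)
    (hevsafe : ∀ t ≥ K, (∀ s ∈ Finset.Icc (t - K + 1) t, lam s ≤ lsafe) →
      (1 / (K : ℝ)) * ∑ s ∈ Finset.Icc (t - K + 1) t, ℓ s ≤ εsafe) :
    ∀ t ≥ K, (1 / (t : ℝ)) * ∑ s ∈ Finset.Icc 1 t, ℓ s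
      ≤ ε + ((lam 1 - lsafe) / η + (K : ℝ)) / t := by
  -- telescoping
  have tele : ∀ a : ℕ, 1 ≤ a → ∀ n : ℕ,
      lam (a + n) = lam a + η * ∑ j ∈ Finset.range n, (ε - ℓ (a + j)) := by
    intro a ha n
    induction n with
    | zero => simp
    | succ n ihn =>
      have h1 : lam (a + n + 1) = lam (a + n) + η * (ε - ℓ (a + n)) :=
        hupd (a + n) (by omega)
      rw [show a + (n + 1) = a + n + 1 from rfl, h1, ihn, Finset.sum_range_succ]
      ring
  -- sum of range form equals n*ε - sum of losses
  have sumform : ∀ a n : ℕ, ∑ j ∈ Finset.range n, (ε - ℓ (a + j))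
      = n * ε - ∑ j ∈ Finset.range n, ℓ (a + j) := by
    intro a n
    rw [Finset.sum_sub_distrib, Finset.sum_const, nsmul_eq_mul]
    simp
  -- key lower bound
  have key : ∀ t : ℕ, 1 ≤ t → lsafe - η * K ≤ lam t := by
    intro t
    induction t using Nat.strong_induction_on with
    | _ t ih =>
      intro ht
      match t, ht with
      | 1, _ =>
        have hK' : (1:ℝ) ≤ (K:ℝ) := by exact_mod_cast hK
        nlinarith [hinit]
      | (m+2), _ =>
        set n := m + 1 with hn
        have hn1 : 1 ≤ n := by omega
        by_cases h1 : lsafe - η * ((K:ℝ) - 1) ≤ lam n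
        · have hu : lam (n + 1) = lam n + η * (ε - ℓ n) := hupd n hn1
          have hl := hℓ n hn1
          have hε0 := hε.1
          have : η * (ε - ℓ n) ≥ η * (-1) := by
            apply mul_le_mul_of_nonneg_left _ hη.le
            linarith [hl.2]
          rw [hu]
          nlinarith
        · push_neg at h1
          -- backward tracking
          have back : ∀ j : ℕ, j < K → j < n →
              lam (n - j) < lsafe - η * ((K:ℝ) - 1 - j) := by
            intro j
            induction j with
            | zero => intro _ _; simpa using h1
            | succ j ihj =>
              intro hjK hjn
              have hj1 : lam (n - j) < lsafe - η * ((K:ℝ) - 1 - j) :=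
                ihj (by omega) (by omega)
              have hs1 : 1 ≤ n - (j+1) := by omega
              have hu : lam (n - (j+1) + 1) = lam (n - (j+1)) + η * (ε - ℓ (n - (j+1))) :=
                hupd _ hs1
              have hidx : n - (j+1) + 1 = n - j := by omega
              rw [hidx] at hu
              have hl := hℓ _ hs1
              have : η * (ε - ℓ (n - (j+1))) ≥ η * (-1) := by
                apply mul_le_mul_of_nonneg_left _ hη.le
                linarith [hl.2, hε.1]
              push_cast
              nlinarith
          by_cases hm : n < K
          · -- λ_1 would be too small, contradiction
            have hb := back (n - 1) (by omega) (by omega)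
            have hidx : n - (n - 1) = 1 := by omega
            rw [hidx] at hb
            have hc : ((n - 1 : ℕ) : ℝ) = (n:ℝ) - 1 := by
              push_cast [Nat.cast_sub hn1]; ring
            rw [hc] at hb
            have hnK : (n:ℝ) + 1 ≤ (K:ℝ) := by exact_mod_cast hm
            nlinarith [hinit]
          · push_neg at hm
            -- apply eventual safety at time n
            have hsafe : ∀ s ∈ Finset.Icc (n - K + 1) n, lam s ≤ lsafe := by
              intro s hs
              rw [Finset.mem_Icc] at hs
              have hj1 : n - s < K := by omega
              have hj2 : n - s < n := by omega
              have hb := back (n - s) hj1 hj2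
              have hidx : n - (n - s) = s := by omega
              rw [hidx] at hb
              have hjc : ((n - s : ℕ) : ℝ) ≤ (K:ℝ) - 1 := by
                have : (n - s : ℕ) ≤ K - 1 := by omega
                have h2 : ((n - s : ℕ) : ℝ) ≤ ((K - 1 : ℕ) : ℝ) := by exact_mod_cast this
                have h3 : ((K - 1 : ℕ) : ℝ) = (K:ℝ) - 1 := by
                  push_cast [Nat.cast_sub hK]; ring
                linarith [h2, h3.le]
              nlinarith
            have hav := hevsafe n hm hsafe
            have hK0 : (0:ℝ) < (K:ℝ) := by exact_mod_cast hK
            have hsum : ∑ s ∈ Finset.Icc (n - K + 1) n, ℓ s ≤ (K:ℝ) * εsafe := by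
              rw [one_div, inv_mul_le_iff₀ hK0] at hav
              linarith
            -- telescope from a = n - K + 1
            set a := n - K + 1 with hadef
            have ha1 : 1 ≤ a := by omega
            have haK : a + K = n + 1 := by omega
            have htel := tele a ha1 K
            rw [haK, sumform] at htel
            have hconv : ∑ s ∈ Finset.Icc a n, ℓ s = ∑ j ∈ Finset.range K, ℓ (a + j) := by
              rw [← Finset.Ico_add_one_right_eq_Icc, Finset.sum_Ico_eq_sum_range]
              have hKa : n + 1 - a = K := by omega
              rw [hKa]
            have hsum2 : ∑ j ∈ Finset.range K, ℓ (a + j) ≤ (K:ℝ) * εsafe := by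
              rw [← hconv]; exact hsum
            have hia : lsafe - η * K ≤ lam a := ih a (by omega) ha1
            have hnonneg : (0:ℝ) ≤ η * ((K:ℝ) * ε - ∑ j ∈ Finset.range K, ℓ (a + j)) := by
              apply mul_nonneg hη.le
              nlinarith
            rw [htel]
            nlinarith
  -- final bound
  intro t ht
  have ht1 : 1 ≤ t := le_trans hK ht
  have htel := tele 1 le_rfl t
  rw [sumform] at htel
  have hconv : ∑ s ∈ Finset.Icc 1 t, ℓ s = ∑ j ∈ Finset.range t, ℓ (1 + j) := by
    rw [← Finset.Ico_add_one_right_eq_Icc, Finset.sum_Ico_eq_sum_range]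
    have h1t : t + 1 - 1 = t := by omega
    rw [h1t]
  have hkey : lsafe - η * K ≤ lam (1 + t) := key (1 + t) (by omega)
  rw [htel] at hkey
  have ht0 : (0:ℝ) < (t:ℝ) := by exact_mod_cast ht1
  have hηS : (lam 1 - lsafe) / η * η = lam 1 - lsafe := div_mul_cancel₀ _ hη.ne'
  have hS : ∑ s ∈ Finset.Icc 1 t, ℓ s ≤ (t:ℝ) * ε + ((lam 1 - lsafe) / η + K) := by
    rw [hconv]
    nlinarith
  have hrhs : ε + ((lam 1 - lsafe) / η + (K:ℝ)) / t
      = ((t:ℝ) * ε + ((lam 1 - lsafe) / η + K)) / t := by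
    field_simp
  rw [hrhs, one_div, ← div_eq_inv_mul]
  exact div_le_div_of_nonneg_right hS ht0.le
end

section
/- Under the conformal controller update with eventual safety (horizon K, ε^safe ≤ ε), if λ_{t} ≥ λ^safe − Kη for all t ≤ T+1, then for all t ∈ [K, T], (1/t) Σ_{s=1}^{t} ℓ_s ≤ ε + (λ_1 − λ^safe + Kη)/(η t). -/
theorem conformal_risk_bound_from_lambda_bound
    (η ε εsafe lsafe : ℝ) (K T : ℕ) (ℓ lam : ℕ → ℝ)
    (hη : 0 < η) (hε : ε ∈ Set.Icc (0:ℝ) 1)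
    (hεsafe : εsafe ∈ Set.Icc (0:ℝ) 1) (hsafe_le : εsafe ≤ ε)
    (hK : 1 ≤ K)
    (hℓ : ∀ t ≥ 1, ℓ t ∈ Set.Icc (0:ℝ) 1)
    (hupd : ∀ t ≥ 1, lam (t + 1) = lam t + η * (ε - ℓ t))
    (hlb : ∀ t, 1 ≤ t → t ≤ T + 1 → lam t ≥ lsafe - (K : ℝ) * η) :
    ∀ t, K ≤ t → t ≤ T →
      (1 / (t : ℝ)) * ∑ s ∈ Finset.Icc 1 t, ℓ s
        ≤ ε + (lam 1 - lsafe + (K : ℝ) * η) / (η * t) := by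
  have tele : ∀ t : ℕ, lam (t + 1) = lam 1 + η * ∑ s ∈ Finset.Icc 1 t, (ε - ℓ s) := by
    intro t
    induction t with
    | zero => simp
    | succ n ih =>
      rw [hupd (n+1) (by omega), ih,
        Finset.sum_Icc_succ_top (by omega : 1 ≤ n + 1)]
      ring
  intro t hKt htT
  have ht1 : 1 ≤ t := le_trans hK hKt
  have htpos : (0:ℝ) < (t:ℝ) := by exact_mod_cast Nat.lt_of_lt_of_le Nat.zero_lt_one ht1
  have hlam := hlb (t+1) (by omega) (by omega)
  have key : ∑ s ∈ Finset.Icc 1 t, ℓ s ≤ (t:ℝ) * ε + (lam 1 - lsafe + (K:ℝ) * η) / η := by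
    have h := tele t
    have hsum : ∑ s ∈ Finset.Icc 1 t, (ε - ℓ s)
        = (t:ℝ) * ε - ∑ s ∈ Finset.Icc 1 t, ℓ s := by
      rw [Finset.sum_sub_distrib, Finset.sum_const, Nat.card_Icc]
      simp
    rw [hsum] at h
    have : lsafe - (K:ℝ) * η ≤ lam 1 + η * ((t:ℝ) * ε - ∑ s ∈ Finset.Icc 1 t, ℓ s) := by
      rw [← h]; exact hlam
    have h2 : (∑ s ∈ Finset.Icc 1 t, ℓ s - (t:ℝ) * ε) * η ≤ lam 1 - lsafe + (K:ℝ) * η := by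
      nlinarith
    have := (div_le_div_iff_of_pos_right hη).mpr h2
    rw [mul_div_cancel_right₀ _ (ne_of_gt hη)] at this
    linarith
  rw [one_div_mul_eq_div, div_le_iff₀ htpos, add_mul]
  have heq : (lam 1 - lsafe + (K:ℝ) * η) / (η * (t:ℝ)) * (t:ℝ)
      = (lam 1 - lsafe + (K:ℝ) * η) / η := by
    field_simp
  rw [heq]
  linarith
end

section
/- Under the conformal controller update λ_{t+1} = λ_t + η(ε − ℓ_t) with losses in [0,1], for any starting value λ_1, the empirical risk satisfies limsup_{t→∞} (1/t) Σ_{s=1}^{t} ℓ_s ≤ ε, provided the eventual-safety property holds with ε^safe ≤ ε and λ_1 ≥ λ^safe − η. -/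
theorem conformal_controller_limsup_risk
    (η ε εsafe lsafe : ℝ) (K : ℕ) (ℓ lam : ℕ → ℝ)
    (hη : 0 < η) (hε : ε ∈ Set.Icc (0:ℝ) 1)
    (hεsafe : εsafe ∈ Set.Icc (0:ℝ) 1) (hsafe_le : εsafe ≤ ε)
    (hK : 1 ≤ K)
    (hℓ : ∀ t ≥ 1, ℓ t ∈ Set.Icc (0:ℝ) 1)
    (hupd : ∀ t ≥ 1, lam (t + 1) = lam t + η * (ε - ℓ t))
    (hinit : lam 1 ≥ lsafe - η)
    (hevsafe : ∀ t ≥ K, (∀ s ∈ Finset.Icc (t - K + 1) t, lam s ≤ lsafe) →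
      (1 / (K : ℝ)) * ∑ s ∈ Finset.Icc (t - K + 1) t, ℓ s ≤ εsafe) :
    Filter.limsup (fun t : ℕ => (1 / (t : ℝ)) * ∑ s ∈ Finset.Icc 1 t, ℓ s)
      Filter.atTop ≤ ε := by
  obtain ⟨hε0, hε1⟩ := hε
  obtain ⟨hεs0, hεs1⟩ := hεsafe
  have hKpos : (0:ℝ) < K := by exact_mod_cast Nat.lt_of_lt_of_le Nat.zero_lt_one hK
  set S : ℕ → ℝ := fun n => ∑ s ∈ Finset.Ioc 0 n, ℓ s with hSdef
  have hIccIoc : ∀ a b : ℕ, Finset.Icc (a + 1) b = Finset.Ioc a b := fun a b =>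
    Finset.Icc_add_one_left_eq_Ioc a b
  -- telescoping
  have tele : ∀ n : ℕ, lam (n + 1) = lam 1 + η * ((n : ℝ) * ε - S n) := by
    intro n
    induction n with
    | zero => simp [S]
    | succ n ih =>
      have hstep := hupd (n + 1) (by omega)
      have hSn : S (n + 1) = S n + ℓ (n + 1) := by
        simp [S, Finset.sum_Ioc_succ_top (Nat.zero_le n)]
      rw [hstep, ih, hSn]; push_cast; ring
  -- loss bounds
  have hℓ0 : ∀ t ≥ 1, 0 ≤ ℓ t := fun t ht => (hℓ t ht).1
  have hℓ1 : ∀ t ≥ 1, ℓ t ≤ 1 := fun t ht => (hℓ t ht).2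
  -- one-step lower bound: lam b ≤ lam (b+1) + η for b ≥ 1
  have step : ∀ b ≥ 1, lam b ≤ lam (b + 1) + η := by
    intro b hb
    have := hupd b hb
    have h1 := hℓ1 b hb
    nlinarith [hη.le]
  -- chain: lam a ≤ lam b + η * (b - a)
  have chain : ∀ a b : ℕ, 1 ≤ a → a ≤ b → lam a ≤ lam b + η * ((b : ℝ) - (a : ℝ)) := by
    intro a b ha hab
    induction b, hab using Nat.le_induction with
    | base => simp
    | succ b hab ih =>
      have hb1 : 1 ≤ b := le_trans ha hab
      have := step b hb1
      push_cast
      nlinarith [hη.le]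
  -- sums are bounded by length
  have Ssum_le : ∀ n : ℕ, S n ≤ (n : ℝ) := by
    intro n
    have : S n ≤ ∑ _s ∈ Finset.Ioc 0 n, (1 : ℝ) :=
      Finset.sum_le_sum fun s hs => hℓ1 s (Finset.mem_Ioc.mp hs).1
    simpa using this
  have Ssum_nonneg : ∀ n : ℕ, 0 ≤ S n := by
    intro n
    exact Finset.sum_nonneg fun s hs => hℓ0 s (Finset.mem_Ioc.mp hs).1
  -- lower bound on lam
  have lower : ∀ t : ℕ, 1 ≤ t → lsafe - η * K ≤ lam t := by
    intro t
    induction t using Nat.strong_induction_on with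
    | _ t ih =>
      intro ht
      by_contra hcon
      push_neg at hcon
      obtain ⟨n, rfl⟩ : ∃ n, t = n + 1 := ⟨t - 1, by omega⟩
      rcases le_or_gt (n + 1) K with hle | hgt
      · -- small t
        have h1 : lam 1 ≤ lam (n + 1) + η * ((n + 1 : ℝ) - 1) := by
          have := chain 1 (n + 1) le_rfl (by omega)
          push_cast at this ⊢; linarith
        have hcast : ((n : ℝ) + 1) ≤ (K : ℝ) := by exact_mod_cast hle
        nlinarith [hη.le]
      · -- t = n+1 > K
        have hnK : K ≤ n := by omega
        set m := n - K with hm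
        have hmn : n = m + K := by omega
        -- all lam in window ≤ lsafe
        have hwin : ∀ s ∈ Finset.Icc (n - K + 1) n, lam s ≤ lsafe := by
          intro s hs
          rw [Finset.mem_Icc] at hs
          have hs1 : 1 ≤ s := by omega
          have hcs := chain s (n + 1) hs1 (by omega)
          have hns : n + 1 ≤ s + K := by omega
          have hslb : ((n : ℝ) + 1) - (s : ℝ) ≤ (K : ℝ) := by
            have h' : ((n + 1 : ℕ) : ℝ) ≤ ((s + K : ℕ) : ℝ) := by exact_mod_cast hns
            push_cast at h'
            linarith
          push_cast at hcs
          nlinarith [hη.le]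
        have hev := hevsafe n hnK hwin
        -- window sum
        set W : ℝ := ∑ s ∈ Finset.Icc (n - K + 1) n, ℓ s with hW
        have hWle : W ≤ (K : ℝ) * εsafe := by
          have h2 : (K : ℝ) * ((1 / (K : ℝ)) * W) ≤ (K : ℝ) * εsafe :=
            mul_le_mul_of_nonneg_left hev hKpos.le
          have h3 : (K : ℝ) * ((1 / (K : ℝ)) * W) = W := by
            field_simp
          linarith [h3 ▸ h2]
        -- window identity
        have hsplit : S m + W = S n := by
          have : Finset.Icc (n - K + 1) n = Finset.Ioc m n := by
            rw [← hm, hIccIoc]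
          rw [hW, this, hSdef]
          exact Finset.sum_Ioc_consecutive ℓ (Nat.zero_le m) (by omega)
        have h1 := tele n
        have h2 := tele m
        have hwid : lam (n + 1) = lam (m + 1) + η * ((K : ℝ) * ε - W) := by
          rw [h1, h2]
          have hcast : (n : ℝ) = (m : ℝ) + (K : ℝ) := by exact_mod_cast hmn
          rw [hcast]
          have : S n = S m + W := hsplit.symm
          rw [this]; ring
        have hih : lsafe - η * K ≤ lam (m + 1) := ih (m + 1) (by omega) (by omega)
        have hWE : W ≤ (K : ℝ) * ε := le_trans hWle (by nlinarith)
        nlinarith [hη.le]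
  -- final limsup argument
  set c : ℝ := (lam 1 - (lsafe - η * K)) / η with hc
  have hc0 : 0 ≤ c := by
    have hK1 : (1 : ℝ) ≤ (K : ℝ) := by exact_mod_cast hK
    have hls : lsafe - η * K ≤ lam 1 := by nlinarith [hη.le]
    exact div_nonneg (by linarith) hη.le
  have key : ∀ t : ℕ, 1 ≤ t →
      (1 / (t : ℝ)) * ∑ s ∈ Finset.Icc 1 t, ℓ s ≤ ε + c / (t : ℝ) := by
    intro t ht
    have htpos : (0:ℝ) < t := by exact_mod_cast ht
    have hsum : (∑ s ∈ Finset.Icc 1 t, ℓ s) = S t := by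
      simp only [hSdef]; rw [← hIccIoc 0 t]
    have h1 := tele t
    have h2 := lower (t + 1) (by omega)
    -- S t ≤ t * ε + c
    have hSb : S t ≤ (t : ℝ) * ε + c := by
      have : η * ((t : ℝ) * ε - S t) = lam (t + 1) - lam 1 := by linarith
      have h3 : (t : ℝ) * ε - S t ≥ (lsafe - η * K - lam 1) / η := by
        rw [ge_iff_le, div_le_iff₀ hη]
        nlinarith
      have h4 : -((t : ℝ) * ε - S t) ≤ c := by
        rw [hc]
        rw [ge_iff_le, div_le_iff₀ hη] at h3
        rw [le_div_iff₀ hη]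
        nlinarith
      linarith
    rw [hsum]
    have htne : (t : ℝ) ≠ 0 := ne_of_gt htpos
    calc (1 / (t : ℝ)) * S t ≤ (1 / (t : ℝ)) * ((t : ℝ) * ε + c) := by
          apply mul_le_mul_of_nonneg_left hSb (by positivity)
      _ = ε + c / (t : ℝ) := by field_simp
  have hfg : (fun t : ℕ => (1 / (t : ℝ)) * ∑ s ∈ Finset.Icc 1 t, ℓ s) ≤ᶠ[Filter.atTop]
      fun t : ℕ => ε + c / (t : ℝ) :=
    Filter.eventually_atTop.mpr ⟨1, key⟩
  have hg : Filter.Tendsto (fun t : ℕ => ε + c / (t : ℝ)) Filter.atTop (nhds ε) := by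
    have := tendsto_const_div_atTop_nhds_zero_nat c
    simpa using Filter.Tendsto.add (tendsto_const_nhds (x := ε)) this
  have hglimsup : Filter.limsup (fun t : ℕ => ε + c / (t : ℝ)) Filter.atTop = ε :=
    hg.limsup_eq
  have hcobdd : Filter.IsCoboundedUnder (· ≤ ·)
      Filter.atTop (fun t : ℕ => (1 / (t : ℝ)) * ∑ s ∈ Finset.Icc 1 t, ℓ s) := by
    apply Filter.IsBoundedUnder.isCoboundedUnder_le
    refine ⟨0, Filter.eventually_map.mpr ?_⟩
    filter_upwards [Filter.eventually_ge_atTop 1] with t ht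
    have : 0 ≤ (1 / (t : ℝ)) * ∑ s ∈ Finset.Icc 1 t, ℓ s := by
      apply mul_nonneg (by positivity)
      exact Finset.sum_nonneg fun s hs => hℓ0 s (Finset.mem_Icc.mp hs).1
    exact this
  have hbdd : Filter.IsBoundedUnder (· ≤ ·) Filter.atTop
      (fun t : ℕ => ε + c / (t : ℝ)) := hg.isBoundedUnder_le
  calc Filter.limsup (fun t : ℕ => (1 / (t : ℝ)) * ∑ s ∈ Finset.Icc 1 t, ℓ s) Filter.atTop
      ≤ Filter.limsup (fun t : ℕ => ε + c / (t : ℝ)) Filter.atTop :=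
        Filter.limsup_le_limsup hfg hcobdd hbdd
    _ = ε := hglimsup
end

section
/- For the conformal controller with K = 1 eventual safety (i.e., ℓ_t ≤ ε^safe whenever λ_t ≤ λ^safe, with ε^safe ≤ ε) and λ_1 ≥ λ^safe − η, one has λ_t ≥ λ^safe − η for all t, and hence (1/t) Σ_{s=1}^{t} ℓ_s ≤ ε + (λ_1 − λ^safe + η)/(η t). -/
theorem conformal_controller_single_step_safety
    (η ε εsafe lsafe : ℝ) (ℓ lam : ℕ → ℝ)
    (hη : 0 < η) (hε : ε ∈ Set.Icc (0:ℝ) 1)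
    (hεsafe : εsafe ∈ Set.Icc (0:ℝ) 1) (hsafe_le : εsafe ≤ ε)
    (hℓ : ∀ t ≥ 1, ℓ t ∈ Set.Icc (0:ℝ) 1)
    (hupd : ∀ t ≥ 1, lam (t + 1) = lam t + η * (ε - ℓ t))
    (hsafe : ∀ t ≥ 1, lam t ≤ lsafe → ℓ t ≤ εsafe)
    (hinit : lam 1 ≥ lsafe - η) :
    (∀ t ≥ 1, lam t ≥ lsafe - η) ∧
    (∀ t : ℕ, 1 ≤ t → (1 / (t : ℝ)) * ∑ s ∈ Finset.Icc 1 t, ℓ s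
      ≤ ε + (lam 1 - lsafe + η) / (η * t)) := by
  have hlow : ∀ t ≥ 1, lam t ≥ lsafe - η := by
    intro t ht
    induction t with
    | zero => omega
    | succ n ih =>
      rcases Nat.lt_or_ge n 1 with hn | hn
      · interval_cases n
        exact hinit
      · have ihn := ih hn
        rw [hupd n hn]
        rcases le_or_gt (lam n) lsafe with h | h
        · have hℓn := hsafe n hn h
          nlinarith
        · have hℓ1 := (hℓ n hn).2
          nlinarith [hε.1]
  refine ⟨hlow, ?_⟩
  have htel : ∀ t : ℕ, lam (t + 1) = lam 1 + η * (t * ε - ∑ s ∈ Finset.Icc 1 t, ℓ s) := by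
    intro t
    induction t with
    | zero => simp
    | succ n ih =>
      have h1 : (1:ℕ) ≤ n + 1 := by omega
      rw [hupd (n+1) h1, ih, Finset.sum_Icc_succ_top h1]
      push_cast
      ring
  intro t ht
  have hpos : (0:ℝ) < t := by exact_mod_cast ht
  have hlt := hlow (t+1) (by omega)
  have h2 := htel t
  have hsum : ∑ s ∈ Finset.Icc 1 t, ℓ s ≤ t * ε + (lam 1 - lsafe + η) / η := by
    rw [ge_iff_le, h2] at hlt
    have hd : (lam 1 - lsafe + η) / η * η = lam 1 - lsafe + η :=
      div_mul_cancel₀ _ hη.ne'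
    nlinarith [hd, hlt, mul_pos hη hpos]
  rw [one_div, inv_mul_le_iff₀ hpos]
  have : ε + (lam 1 - lsafe + η) / (η * t) = (t * ε + (lam 1 - lsafe + η) / η) / t := by
    field_simp
  rw [this, mul_comm, div_mul_cancel₀ _ (ne_of_gt hpos)]
  exact hsum
end

section
/- Under the conformal controller with eventual safety (λ^safe, ε^safe ≤ ε, horizon K) and λ_1 ≥ λ^safe − η, the total cumulative loss satisfies Σ_{s=1}^{t} ℓ_s ≤ εt + (λ_1 − λ^safe)/η + K for all t ≥ K, so the excess cumulative loss over the linear rate εt is bounded by a constant independent of t. -/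
theorem conformal_cumulative_loss_bound
    (η ε εsafe lsafe : ℝ) (K : ℕ) (ℓ lam : ℕ → ℝ)
    (hη : 0 < η) (hε : ε ∈ Set.Icc (0:ℝ) 1)
    (hεsafe : εsafe ∈ Set.Icc (0:ℝ) 1) (hsafe_le : εsafe ≤ ε)
    (hK : 1 ≤ K)
    (hℓ : ∀ t ≥ 1, ℓ t ∈ Set.Icc (0:ℝ) 1)
    (hupd : ∀ t ≥ 1, lam (t + 1) = lam t + η * (ε - ℓ t))
    (hinit : lam 1 ≥ lsafe - η)
    (hevsafe : ∀ t ≥ K, (∀ s ∈ Finset.Icc (t - K + 1) t, lam s ≤ lsafe) →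
      (1 / (K : ℝ)) * ∑ s ∈ Finset.Icc (t - K + 1) t, ℓ s ≤ εsafe) :
    ∀ t ≥ K, ∑ s ∈ Finset.Icc 1 t, ℓ s
      ≤ ε * t + (lam 1 - lsafe) / η + (K : ℝ) := by
  obtain ⟨hε0, hε1⟩ := hε
  -- telescoping identity
  have tele : ∀ a : ℕ, 1 ≤ a → ∀ n : ℕ,
      lam (a + n) = lam a + η * (ε * n - ∑ i ∈ Finset.range n, ℓ (a + i)) := by
    intro a ha n
    induction n with
    | zero => simp
    | succ n ihn =>
      have h1 : 1 ≤ a + n := le_trans ha (Nat.le_add_right a n)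
      have := hupd (a + n) h1
      rw [show a + (n + 1) = (a + n) + 1 from rfl, this, ihn,
        Finset.sum_range_succ]
      push_cast
      ring
  -- per-step decay bound
  have decay : ∀ s : ℕ, 1 ≤ s → ∀ n : ℕ, lam (s + n) ≥ lam s - η * n := by
    intro s hs n
    induction n with
    | zero => simp
    | succ n ihn =>
      have h1 : 1 ≤ s + n := le_trans hs (Nat.le_add_right s n)
      have hu := hupd (s + n) h1
      have hl := hℓ (s + n) h1
      have : lam ((s + n) + 1) ≥ lam (s + n) - η := by
        rw [hu]; nlinarith [hl.2]
      rw [show s + (n + 1) = (s + n) + 1 from rfl]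
      push_cast
      nlinarith
  -- lower bound on lam
  have LB : ∀ t : ℕ, 1 ≤ t → lam t ≥ lsafe - η * K := by
    intro t
    induction t using Nat.strong_induction_on with
    | _ t ih =>
      intro ht
      match t, ht with
      | 1, _ =>
        have : (1:ℝ) ≤ (K:ℝ) := by exact_mod_cast hK
        nlinarith
      | (v+2), _ =>
        set u := v + 1 with hu
        clear_value u
        have hu1 : 1 ≤ u := by omega
        have huv : v + 2 = u + 1 := by omega
        rw [huv]
        by_cases hcase : u < K
        · -- early phase: lam (u+1) ≥ lam 1 - η * u ≥ lsafe - η - η*u ≥ lsafe - η*K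
          have hd := decay 1 le_rfl u
          have : lam (1 + u) = lam (u + 1) := by rw [Nat.add_comm]
          rw [this] at hd
          have hcast : (u:ℝ) + 1 ≤ (K:ℝ) := by exact_mod_cast hcase
          nlinarith
        · push_neg at hcase
          set a := u - K + 1 with ha
          have ha1 : 1 ≤ a := by omega
          clear_value a
          have haK : a + K = u + 1 := by omega
          by_cases hall : ∀ s ∈ Finset.Icc (u - K + 1) u, lam s ≤ lsafe
          · -- safe window: loss small, lam doesn't decrease over window
            have hev := hevsafe u hcase hall
            have hKpos : (0:ℝ) < K := by exact_mod_cast hK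
            have hsum : ∑ s ∈ Finset.Icc (u - K + 1) u, ℓ s ≤ (K:ℝ) * ε := by
              have h1 : ∑ s ∈ Finset.Icc (u - K + 1) u, ℓ s ≤ (K:ℝ) * εsafe := by
                rw [one_div] at hev
                calc ∑ s ∈ Finset.Icc (u - K + 1) u, ℓ s
                    = (K:ℝ) * ((K:ℝ)⁻¹ * ∑ s ∈ Finset.Icc (u - K + 1) u, ℓ s) := by
                      field_simp
                  _ ≤ (K:ℝ) * εsafe := by
                      exact mul_le_mul_of_nonneg_left hev hKpos.le
              nlinarith
            have hrange : ∑ s ∈ Finset.Icc (u - K + 1) u, ℓ s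
                = ∑ i ∈ Finset.range K, ℓ (a + i) := by
              have hKeq : u.succ - (u - K + 1) = K := by omega
              rw [← Finset.Ico_add_one_right_eq_Icc, Finset.sum_Ico_eq_sum_range, ← Nat.succ_eq_add_one, hKeq, ha]
            have ht2 := tele a ha1 K
            rw [haK] at ht2
            have hia := ih a (by omega) ha1
            rw [hrange] at hsum
            nlinarith
          · push_neg at hall
            obtain ⟨s, hsmem, hslam⟩ := hall
            rw [Finset.mem_Icc] at hsmem
            have hs1 : 1 ≤ s := by omega
            have hd := decay s hs1 (u + 1 - s)
            have hss : s + (u + 1 - s) = u + 1 := by omega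
            rw [hss] at hd
            have hle : ((u + 1 - s : ℕ):ℝ) ≤ (K:ℝ) := by
              exact_mod_cast (by omega : u + 1 - s ≤ K)
            nlinarith
  -- conclude
  intro t ht
  have ht1 : 1 ≤ t := le_trans hK ht
  have htel := tele 1 le_rfl t
  have hLB := LB (1 + t) (by omega)
  have hrange : ∑ s ∈ Finset.Icc 1 t, ℓ s = ∑ i ∈ Finset.range t, ℓ (1 + i) := by
    rw [← Finset.Ico_add_one_right_eq_Icc, Finset.sum_Ico_eq_sum_range]
    congr 1
  rw [hrange]
  have key : η * (∑ i ∈ Finset.range t, ℓ (1 + i))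
      ≤ η * (ε * t + (lam 1 - lsafe) / η + (K:ℝ)) := by
    have hdm : (lam 1 - lsafe) / η * η = lam 1 - lsafe :=
      div_mul_cancel₀ _ hη.ne'
    nlinarith
  exact (mul_le_mul_iff_right₀ hη).mp key
end
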